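/- For every n ≥ 1, σ(μ_n) = q · Q^{1−n} · μ_n in K (i.e., μ_n(q^{−1}) = q^{1−(n−1)ν} μ_n(q)). -/

import Mathlib

/- Let `K` be the fraction field of `ℚ[q,Q]`, where `Q` plays the role of `q^ν`.
`θν` and `θν1` are the series `θ_ν` and `θ_{ν+1}` of the Hahn–Exton `q`-Bessel
functions, and `μ n` are the coefficients of `θ_{ν+1}/θ_ν`. -/

noncomputable section

abbrev K : Type := FractionRing (MvPolynomial (Fin 2) ℚ)

def qv : K := algebraMap (MvPolynomial (Fin 2) ℚ) K (MvPolynomial.X 0)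

def Qv : K := algebraMap (MvPolynomial (Fin 2) ℚ) K (MvPolynomial.X 1)

/-- The q-Pochhammer symbol `(a;q)_n`. -/
def qPoch (a : K) (n : ℕ) : K := ∏ j ∈ Finset.range n, (1 - a * qv ^ j)

/-- `[ν+k]_q = (1 - Q q^k)/(1-q)`. -/
def brk (k : ℕ) : K := (1 - Qv * qv ^ k) / (1 - qv)

/-- `[ν]_q = (1 - Q)/(1-q)`. -/
def brNu : K := (1 - Qv) / (1 - qv)

/-- `θ_ν(x)`. -/
def θν : PowerSeries K :=
  PowerSeries.mk fun n =>
    (-1) ^ n * qv ^ (n * (n - 1) / 2) * Qv ^ n * (1 - qv) ^ (2 * n)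
      / (qPoch qv n * qPoch (Qv * qv) n)

/-- `θ_{ν+1}(x)`, i.e. `θ_ν` with `Q` replaced by `Qq`. -/
def θν1 : PowerSeries K :=
  PowerSeries.mk fun n =>
    (-1) ^ n * qv ^ (n * (n - 1) / 2) * (Qv * qv) ^ n * (1 - qv) ^ (2 * n)
      / (qPoch qv n * qPoch (Qv * qv ^ 2) n)

/-- The coefficients `μ_n` of `θ_{ν+1}(x)/θ_ν(x)`. -/
def μ (n : ℕ) : K := PowerSeries.coeff n (θν1 * θν⁻¹)

/- ### Auxiliary lemmas -/

lemma Tsucc (n : ℕ) : (n+1)*n/2 = n*(n-1)/2 + n := by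
  have h1 := Finset.sum_range_id (n+1)
  rw [Finset.sum_range_succ, Finset.sum_range_id] at h1
  simpa using h1.symm

lemma algMap_inj : Function.Injective (algebraMap (MvPolynomial (Fin 2) ℚ) K) :=
  IsFractionRing.injective _ _

lemma hq0 : qv ≠ 0 := by
  intro h
  have : (MvPolynomial.X 0 : MvPolynomial (Fin 2) ℚ) = 0 := by
    apply algMap_inj; rw [map_zero]; exact h
  exact MvPolynomial.X_ne_zero 0 this

lemma hQ0 : Qv ≠ 0 := by
  intro h
  have : (MvPolynomial.X 1 : MvPolynomial (Fin 2) ℚ) = 0 := by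
    apply algMap_inj; rw [map_zero]; exact h
  exact MvPolynomial.X_ne_zero 1 this

lemma one_sub_ne (p : MvPolynomial (Fin 2) ℚ) (hp : MvPolynomial.eval 0 p = 0) :
    (1 : K) - algebraMap (MvPolynomial (Fin 2) ℚ) K p ≠ 0 := by
  intro h
  have h1 : algebraMap (MvPolynomial (Fin 2) ℚ) K 1 = algebraMap (MvPolynomial (Fin 2) ℚ) K p := by
    rw [map_one]; exact sub_eq_zero.mp h
  have h2 := algMap_inj h1
  rw [← h2] at hp
  simp at hp

lemma one_sub_q_pow_ne (b : ℕ) : (1:K) - qv^(b+1) ≠ 0 := by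
  have h : qv^(b+1) = algebraMap (MvPolynomial (Fin 2) ℚ) K (MvPolynomial.X 0 ^ (b+1)) := by
    rw [map_pow]; rfl
  rw [h]
  apply one_sub_ne
  simp

lemma one_sub_Qq_ne (b : ℕ) : (1:K) - Qv * qv^b ≠ 0 := by
  have h : Qv * qv^b
      = algebraMap (MvPolynomial (Fin 2) ℚ) K (MvPolynomial.X 1 * MvPolynomial.X 0 ^ b) := by
    rw [map_mul, map_pow]; rfl
  rw [h]
  apply one_sub_ne
  simp

lemma one_sub_q_ne : (1:K) - qv ≠ 0 := by
  have := one_sub_q_pow_ne 0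
  simpa using this

lemma qPoch_qv_ne (n : ℕ) : qPoch qv n ≠ 0 := by
  rw [qPoch]
  apply Finset.prod_ne_zero_iff.mpr
  intro j _
  have h : qv * qv ^ j = qv ^ (j+1) := by ring
  rw [h]; exact one_sub_q_pow_ne j

lemma qPoch_pow_ne (k n : ℕ) : qPoch (Qv * qv ^ k) n ≠ 0 := by
  rw [qPoch]
  apply Finset.prod_ne_zero_iff.mpr
  intro j _
  have h : Qv * qv ^ k * qv ^ j = Qv * qv ^ (k+j) := by rw [mul_assoc, ← pow_add]
  rw [h]; exact one_sub_Qq_ne (k+j)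

lemma qPoch_Qq_ne (n : ℕ) : qPoch (Qv * qv) n ≠ 0 := by
  have h : (Qv * qv : K) = Qv * qv ^ 1 := by ring
  rw [h]; exact qPoch_pow_ne 1 n

lemma qPoch_Qq2_ne (n : ℕ) : qPoch (Qv * qv ^ 2) n ≠ 0 := qPoch_pow_ne 2 n

/- ### Coefficients of θν and θν1 -/

def cc (n : ℕ) : K :=
  (-1) ^ n * qv ^ (n * (n - 1) / 2) * Qv ^ n * (1 - qv) ^ (2 * n)
    / (qPoch qv n * qPoch (Qv * qv) n)

def dd (n : ℕ) : K :=
  (-1) ^ n * qv ^ (n * (n - 1) / 2) * (Qv * qv) ^ n * (1 - qv) ^ (2 * n)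
    / (qPoch qv n * qPoch (Qv * qv ^ 2) n)

lemma coeff_θν (n : ℕ) : PowerSeries.coeff n θν = cc n := by
  rw [θν, PowerSeries.coeff_mk]; rfl

lemma coeff_θν1 (n : ℕ) : PowerSeries.coeff n θν1 = dd n := by
  rw [θν1, PowerSeries.coeff_mk]; rfl

lemma cc_zero : cc 0 = 1 := by simp [cc, qPoch]

lemma dd_zero : dd 0 = 1 := by simp [dd, qPoch]

lemma cc_succ (n : ℕ) :
    cc (n+1) = cc n * (-(qv^n) * Qv * (1-qv)^2 / ((1 - qv^(n+1)) * (1 - Qv * qv^(n+1)))) := by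
  have hT : (n + 1) * (n + 1 - 1) / 2 = n*(n-1)/2 + n := by simpa using Tsucc n
  rw [cc, cc, hT]
  rw [qPoch, qPoch, Finset.prod_range_succ, Finset.prod_range_succ, ← qPoch, ← qPoch]
  have h1 : (1:K) - qv * qv ^ n = 1 - qv^(n+1) := by ring
  have h2 : (1:K) - Qv * qv * qv ^ n = 1 - Qv * qv^(n+1) := by ring
  rw [h1, h2]
  field_simp [qPoch_qv_ne, qPoch_Qq_ne, one_sub_q_pow_ne n, one_sub_Qq_ne (n+1)]
  ring

lemma dd_succ (n : ℕ) :
    dd (n+1) = dd n * (-(qv^n) * (Qv*qv) * (1-qv)^2 / ((1 - qv^(n+1)) * (1 - Qv * qv^(n+2)))) := by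
  have hT : (n + 1) * (n + 1 - 1) / 2 = n*(n-1)/2 + n := by simpa using Tsucc n
  rw [dd, dd, hT]
  rw [qPoch, qPoch, Finset.prod_range_succ, Finset.prod_range_succ, ← qPoch, ← qPoch]
  have h1 : (1:K) - qv * qv ^ n = 1 - qv^(n+1) := by ring
  have h2 : (1:K) - Qv * qv ^ 2 * qv ^ n = 1 - Qv * qv^(n+2) := by ring
  rw [h1, h2]
  field_simp [qPoch_qv_ne, qPoch_Qq2_ne, one_sub_q_pow_ne n, one_sub_Qq_ne (n+2)]
  ring

/- ### Action of σ on the coefficients -/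

lemma inv_one_sub (x : K) (hx : x ≠ 0) : (1:K) - x⁻¹ = -x⁻¹ * (1 - x) := by
  field_simp
  ring

set_option maxHeartbeats 2000000 in
lemma sigma_cc (σ : K ≃+* K) (hq : σ qv = qv⁻¹) (hQ : σ Qv = Qv⁻¹) (n : ℕ) :
    σ (cc n) = (Qv ^ n)⁻¹ * cc n := by
  induction n with
  | zero => simp [cc_zero]
  | succ n ih =>
    have hr : σ (-(qv^n) * Qv * (1-qv)^2 / ((1 - qv^(n+1)) * (1 - Qv * qv^(n+1))))
        = Qv⁻¹ * (-(qv^n) * Qv * (1-qv)^2 / ((1 - qv^(n+1)) * (1 - Qv * qv^(n+1)))) := by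
      simp only [map_div₀, map_mul, map_sub, map_neg, map_one, map_pow, hq, hQ]
      have h1 : (1:K) - qv^(n+1) ≠ 0 := one_sub_q_pow_ne n
      have h2 : (1:K) - Qv * qv^(n+1) ≠ 0 := one_sub_Qq_ne (n+1)
      have e1 : (1:K) - (qv⁻¹)^(n+1) = -(qv^(n+1))⁻¹ * (1 - qv^(n+1)) := by
        rw [inv_pow]; exact inv_one_sub _ (pow_ne_zero _ hq0)
      have e2 : (1:K) - Qv⁻¹ * (qv⁻¹)^(n+1)
          = -(Qv * qv^(n+1))⁻¹ * (1 - Qv * qv^(n+1)) := by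
        rw [inv_pow, ← mul_inv]
        exact inv_one_sub _ (mul_ne_zero hQ0 (pow_ne_zero _ hq0))
      have e3 : ((1:K) - qv⁻¹)^2 = (qv⁻¹)^2 * (1 - qv)^2 := by
        rw [inv_one_sub qv hq0, mul_pow, neg_sq]
      rw [e1, e2, e3]
      have h3 : (qv:K)^(n+1) ≠ 0 := pow_ne_zero _ hq0
      have Dne : (-(qv^(n+1))⁻¹ * (1 - qv^(n+1))) * (-(Qv * qv^(n+1))⁻¹ * (1 - Qv * qv^(n+1))) ≠ 0 :=
        mul_ne_zero (mul_ne_zero (neg_ne_zero.mpr (inv_ne_zero h3)) h1)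
          (mul_ne_zero (neg_ne_zero.mpr (inv_ne_zero (mul_ne_zero hQ0 h3))) h2)
      have Ene : ((1:K) - qv^(n+1)) * (1 - Qv * qv^(n+1)) ≠ 0 := mul_ne_zero h1 h2
      rw [← mul_div_assoc, div_eq_div_iff Dne Ene]
      field_simp [hq0, hQ0]
      have hc : qv ^ (n*2) * qv⁻¹ ^ n = qv ^ n := by
        rw [pow_mul, inv_pow, sq, mul_assoc, mul_inv_cancel₀ (pow_ne_zero _ hq0), mul_one]
      linear_combination (-(qv^2) + 2*qv^3 - qv^4) * hc
    rw [cc_succ, map_mul, ih, hr, pow_succ Qv n, mul_inv]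
    ring

set_option maxHeartbeats 2000000 in
lemma sigma_dd (σ : K ≃+* K) (hq : σ qv = qv⁻¹) (hQ : σ Qv = Qv⁻¹) (n : ℕ) :
    σ (dd n) = ((Qv * qv) ^ n)⁻¹ * dd n := by
  induction n with
  | zero => simp [dd_zero]
  | succ n ih =>
    have hr : σ (-(qv^n) * (Qv*qv) * (1-qv)^2 / ((1 - qv^(n+1)) * (1 - Qv * qv^(n+2))))
        = (Qv*qv)⁻¹ * (-(qv^n) * (Qv*qv) * (1-qv)^2 / ((1 - qv^(n+1)) * (1 - Qv * qv^(n+2)))) := by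
      simp only [map_div₀, map_mul, map_sub, map_neg, map_one, map_pow, hq, hQ]
      have h1 : (1:K) - qv^(n+1) ≠ 0 := one_sub_q_pow_ne n
      have h2 : (1:K) - Qv * qv^(n+2) ≠ 0 := one_sub_Qq_ne (n+2)
      have e1 : (1:K) - (qv⁻¹)^(n+1) = -(qv^(n+1))⁻¹ * (1 - qv^(n+1)) := by
        rw [inv_pow]; exact inv_one_sub _ (pow_ne_zero _ hq0)
      have e2 : (1:K) - Qv⁻¹ * (qv⁻¹)^(n+2)
          = -(Qv * qv^(n+2))⁻¹ * (1 - Qv * qv^(n+2)) := by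
        rw [inv_pow, ← mul_inv]
        exact inv_one_sub _ (mul_ne_zero hQ0 (pow_ne_zero _ hq0))
      have e3 : ((1:K) - qv⁻¹)^2 = (qv⁻¹)^2 * (1 - qv)^2 := by
        rw [inv_one_sub qv hq0, mul_pow, neg_sq]
      rw [e1, e2, e3]
      have h3 : (qv:K)^(n+1) ≠ 0 := pow_ne_zero _ hq0
      have h4 : (qv:K)^(n+2) ≠ 0 := pow_ne_zero _ hq0
      have Dne : (-(qv^(n+1))⁻¹ * (1 - qv^(n+1))) * (-(Qv * qv^(n+2))⁻¹ * (1 - Qv * qv^(n+2))) ≠ 0 :=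
        mul_ne_zero (mul_ne_zero (neg_ne_zero.mpr (inv_ne_zero h3)) h1)
          (mul_ne_zero (neg_ne_zero.mpr (inv_ne_zero (mul_ne_zero hQ0 h4))) h2)
      have Ene : ((1:K) - qv^(n+1)) * (1 - Qv * qv^(n+2)) ≠ 0 := mul_ne_zero h1 h2
      rw [← mul_div_assoc, div_eq_div_iff Dne Ene]
      field_simp [hq0, hQ0]
      have hc : qv ^ (n*2) * qv⁻¹ ^ n = qv ^ n := by
        rw [pow_mul, inv_pow, sq, mul_assoc, mul_inv_cancel₀ (pow_ne_zero _ hq0), mul_one]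
      linear_combination (-(qv^3) + 2*qv^4 - qv^5) * hc
    rw [dd_succ, map_mul, ih, hr, pow_succ (Qv*qv) n, mul_inv]
    ring

/- ### The contiguity identity -/

lemma poch_shift (n : ℕ) :
    (1 - Qv * qv) * qPoch (Qv * qv ^ 2) n = (1 - Qv * qv ^ (n+1)) * qPoch (Qv * qv) n := by
  induction n with
  | zero => simp [qPoch]
  | succ n ih =>
    rw [qPoch, qPoch, Finset.prod_range_succ, Finset.prod_range_succ, ← qPoch, ← qPoch]
    linear_combination (1 - Qv * qv ^ 2 * qv ^ n) * ih

lemma keyC (n : ℕ) : (qv^n)⁻¹ * dd n = qv * Qv * dd n + (1 - qv * Qv) * cc n := by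
  have h := poch_shift n
  have h1 := qPoch_qv_ne n
  have h2 := qPoch_Qq_ne n
  have h3 := qPoch_Qq2_ne n
  have h4 : (qv:K)^n ≠ 0 := pow_ne_zero _ hq0
  have h5 : (1:K) - Qv * qv^(n+1) ≠ 0 := one_sub_Qq_ne (n+1)
  have hdd : dd n = (-1)^n * qv^(n*(n-1)/2) * (Qv*qv)^n * (1-qv)^(2*n) * (1 - Qv*qv)
      / (qPoch qv n * qPoch (Qv*qv) n * (1 - Qv*qv^(n+1))) := by
    rw [dd, div_eq_div_iff (mul_ne_zero h1 h3) (mul_ne_zero (mul_ne_zero h1 h2) h5)]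
    linear_combination (-((-1)^n * qv^(n*(n-1)/2) * (Qv*qv)^n * (1-qv)^(2*n) * qPoch qv n)) * h
  rw [hdd, cc]
  field_simp
  ring

/- ### Power series level -/

lemma constCoeff_θν : PowerSeries.constantCoeff θν = 1 := by
  have h := coeff_θν 0
  rw [PowerSeries.coeff_zero_eq_constantCoeff] at h
  rw [h, cc_zero]

lemma θν_inv_mul : θν⁻¹ * θν = 1 :=
  PowerSeries.inv_mul_cancel _ (by rw [constCoeff_θν]; exact one_ne_zero)

lemma map_θν (σ : K ≃+* K) (hq : σ qv = qv⁻¹) (hQ : σ Qv = Qv⁻¹) :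
    PowerSeries.map (σ : K →+* K) θν = PowerSeries.rescale Qv⁻¹ θν := by
  ext n
  rw [PowerSeries.coeff_map, PowerSeries.coeff_rescale, coeff_θν, inv_pow]
  exact sigma_cc σ hq hQ n

lemma map_θν1 (σ : K ≃+* K) (hq : σ qv = qv⁻¹) (hQ : σ Qv = Qv⁻¹) :
    PowerSeries.map (σ : K →+* K) θν1 = PowerSeries.rescale (Qv * qv)⁻¹ θν1 := by
  ext n
  rw [PowerSeries.coeff_map, PowerSeries.coeff_rescale, coeff_θν1, inv_pow]
  exact sigma_dd σ hq hQ n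

lemma keyC' : PowerSeries.rescale qv⁻¹ θν1
    = PowerSeries.C (qv * Qv) * θν1 + PowerSeries.C (1 - qv * Qv) * θν := by
  ext n
  rw [PowerSeries.coeff_rescale, map_add, PowerSeries.coeff_C_mul, PowerSeries.coeff_C_mul,
    coeff_θν, coeff_θν1, inv_pow]
  exact keyC n

lemma rescale_θν_ne : PowerSeries.rescale Qv⁻¹ θν ≠ 0 := by
  intro h
  have h0 : PowerSeries.coeff 0 (PowerSeries.rescale Qv⁻¹ θν) = 1 := by
    rw [PowerSeries.coeff_rescale, pow_zero, one_mul, coeff_θν, cc_zero]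
  rw [h] at h0
  simp at h0

theorem sigma_mu_eq' (σ : K ≃+* K) (hq : σ qv = qv⁻¹) (hQ : σ Qv = Qv⁻¹) :
    ∀ n : ℕ, 1 ≤ n → σ (μ n) = qv * Qv ^ (1 - (n : ℤ)) * μ n := by
  intro n hn
  have hfθ : (θν1 * θν⁻¹) * θν = θν1 := by rw [mul_assoc, θν_inv_mul, mul_one]
  have hmapf : PowerSeries.map (σ : K →+* K) (θν1 * θν⁻¹)
      = PowerSeries.rescale Qv⁻¹
          (PowerSeries.C (qv * Qv) * (θν1 * θν⁻¹) + PowerSeries.C (1 - qv * Qv)) := by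
    apply mul_right_cancel₀ rescale_θν_ne
    calc PowerSeries.map (σ : K →+* K) (θν1 * θν⁻¹) * PowerSeries.rescale Qv⁻¹ θν
        = PowerSeries.map (σ : K →+* K) (θν1 * θν⁻¹) * PowerSeries.map (σ : K →+* K) θν := by
          rw [map_θν σ hq hQ]
      _ = PowerSeries.map (σ : K →+* K) ((θν1 * θν⁻¹) * θν) := (map_mul _ _ _).symm
      _ = PowerSeries.map (σ : K →+* K) θν1 := by rw [hfθ]
      _ = PowerSeries.rescale (Qv * qv)⁻¹ θν1 := map_θν1 σ hq hQ
      _ = PowerSeries.rescale Qv⁻¹ (PowerSeries.rescale qv⁻¹ θν1) := by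
          rw [PowerSeries.rescale_rescale, mul_inv_rev]
      _ = PowerSeries.rescale Qv⁻¹
            ((PowerSeries.C (qv * Qv) * (θν1 * θν⁻¹) + PowerSeries.C (1 - qv * Qv)) * θν) := by
          rw [keyC', add_mul, mul_assoc, hfθ]
      _ = PowerSeries.rescale Qv⁻¹
            (PowerSeries.C (qv * Qv) * (θν1 * θν⁻¹) + PowerSeries.C (1 - qv * Qv))
          * PowerSeries.rescale Qv⁻¹ θν := map_mul _ _ _
  have hcoe : σ (μ n) = (σ : K →+* K) (μ n) := rfl
  have hμ : μ n = PowerSeries.coeff n (θν1 * θν⁻¹) := rfl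
  rw [hcoe, hμ, ← PowerSeries.coeff_map, hmapf, PowerSeries.coeff_rescale, map_add,
    PowerSeries.coeff_C_mul, PowerSeries.coeff_C, if_neg (by omega : n ≠ 0), add_zero]
  have hz : Qv ^ ((1:ℤ) - n) = Qv * (Qv ^ n)⁻¹ := by
    rw [zpow_sub₀ hQ0, zpow_one, zpow_natCast, div_eq_mul_inv]
  rw [hz, inv_pow]
  ring

/-- Proposition 2.6: `μ_n(q⁻¹) = q^{1-(n-1)ν} μ_n(q)`, i.e. `σ(μ_n) = q Q^{1-n} μ_n`,
where `σ` is the field automorphism of `K` determined by `σ(q) = q⁻¹`, `σ(Q) = Q⁻¹`. -/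
theorem sigma_mu_eq (σ : K ≃+* K) (hq : σ qv = qv⁻¹) (hQ : σ Qv = Qv⁻¹) :
    ∀ n : ℕ, 1 ≤ n → σ (μ n) = qv * Qv ^ (1 - (n : ℤ)) * μ n :=
  sigma_mu_eq' σ hq hQ

end
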